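/- The associated order equals the fixed points of the integral group ring: A_H = O_L[N]^G. -/

import Mathlib

/-! Common setting: `L/K` a finite unramified (hence Galois, with cyclic group
`G = Gal(L/K)`) extension of `p`-adic fields, `λ : G → Perm G` the
left-translation embedding, `N` a regular subgroup of `Perm G` normalised by
`λ(G)` (given abstractly via an injective `ι : N →* Perm G` with regular image,
the normalisation encoded by the conjugation action `c : G →* MulAut N` with
`ι (c g n) = λ g * ι n * (λ g)⁻¹`), and `H = L[N]^G` the Greither–Pareigis Hopf
algebra, acting on `L` by `(Σ cₙ n) · x = Σ cₙ ((ι n)⁻¹ 1)(x)`.  Valuation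
rings are the integral closures of `ℤ_[p]`; `L/K` unramified is expressed by
saying that the maximal ideal of `O_K` generates the maximal ideal of `O_L`. -/

noncomputable section

variable (p : ℕ) [Fact p.Prime]
variable (K L : Type) [Field K] [Field L]
  [Algebra ℚ_[p] K] [FiniteDimensional ℚ_[p] K]
  [Algebra ℚ_[p] L] [FiniteDimensional ℚ_[p] L]
  [Algebra ℤ_[p] K] [IsScalarTower ℤ_[p] ℚ_[p] K]
  [Algebra ℤ_[p] L] [IsScalarTower ℤ_[p] ℚ_[p] L]
  [Algebra K L] [IsScalarTower ℚ_[p] K L] [IsScalarTower ℤ_[p] K L]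
  [FiniteDimensional K L] [IsGalois K L]

/-- The inclusion `O_K → O_L` induced by `K → L`. -/
def OKtoOL : (integralClosure ℤ_[p] K) →ₐ[ℤ_[p]] (integralClosure ℤ_[p] L) :=
  AlgHom.codRestrict
    ((IsScalarTower.toAlgHom ℤ_[p] K L).comp (integralClosure ℤ_[p] K).val)
    (integralClosure ℤ_[p] L)
    (fun a => a.2.map (IsScalarTower.toAlgHom ℤ_[p] K L))

instance : Algebra (integralClosure ℤ_[p] K) (integralClosure ℤ_[p] L) :=
  (OKtoOL p K L).toRingHom.toAlgebra

/-- `L/K` is unramified: the maximal ideal of `O_K` generates the maximal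
ideal of `O_L`. -/
def IsUnramifiedExt [IsLocalRing (integralClosure ℤ_[p] K)]
    [IsLocalRing (integralClosure ℤ_[p] L)] : Prop :=
  Ideal.map (algebraMap (integralClosure ℤ_[p] K) (integralClosure ℤ_[p] L))
      (IsLocalRing.maximalIdeal (integralClosure ℤ_[p] K)) =
    IsLocalRing.maximalIdeal (integralClosure ℤ_[p] L)

variable (N : Type) [Group N] [Fintype N]
  (ι : N →* Equiv.Perm (L ≃ₐ[K] L))
  (c : (L ≃ₐ[K] L) →* MulAut N)

/-- The left-translation embedding `λ : G → Perm G`. -/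
def lam : (L ≃ₐ[K] L) →* Equiv.Perm (L ≃ₐ[K] L) :=
  MulAction.toPermHom _ _

/-- The semilinear action of `g ∈ G` on the group algebra `L[N]`: on
coefficients as the Galois automorphism `g`, on group elements by conjugation
through `λ` (encoded by `c`). -/
def galTwist (g : L ≃ₐ[K] L) (z : MonoidAlgebra L N) : MonoidAlgebra L N :=
  MonoidAlgebra.ofCoeff (Finsupp.mapDomain (c g) (Finsupp.mapRange g (map_zero g) z.coeff))

/-- The Hopf–Galois action of `H = L[N]^G` on `L`:
`(Σ cₙ n) · x = Σ cₙ ((ι n)⁻¹ 1)(x)`. -/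
def hopfAct (z : MonoidAlgebra L N) (x : L) : L :=
  z.coeff.sum fun n cn => cn * ((ι n)⁻¹ (1 : L ≃ₐ[K] L)) x

/-- The fixed points `H = L[N]^G`. -/
def Hset : Set (MonoidAlgebra L N) :=
  {z | ∀ g : L ≃ₐ[K] L, galTwist K L N c g z = z}

/-- The associated order `A_H = {h ∈ H | h · O_L ⊆ O_L}`. -/
def AH : Set (MonoidAlgebra L N) :=
  {z | z ∈ Hset K L N c ∧
    ∀ x ∈ (integralClosure ℤ_[p] L : Set L),
      hopfAct K L N ι z x ∈ (integralClosure ℤ_[p] L : Set L)}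

/-- `O_L[N]^G`: the `G`-fixed elements of the integral group ring `O_L[N]`. -/
def OLN : Set (MonoidAlgebra L N) :=
  {z | z ∈ Hset K L N c ∧ ∀ n : N, z.coeff n ∈ integralClosure ℤ_[p] L}

/-- `O_L` is a free `A_H`-module (necessarily of rank one). -/
def IsFreeRankOne : Prop :=
  ∃ b ∈ (integralClosure ℤ_[p] L : Set L), ∀ x ∈ (integralClosure ℤ_[p] L : Set L),
    ∃! z : MonoidAlgebra L N, z ∈ AH p K L N ι c ∧ hopfAct K L N ι z b = x

end


section TraceComm

variable {R S R' S' : Type*} [CommRing R] [CommRing S] [CommRing R'] [CommRing S']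
  [Algebra R S] [Algebra R' S']

theorem myRepr_comm {I : Type*} [Fintype I]
    (f : R →+* R') (g : S →+* S')
    (hcomm : ∀ r, g (algebraMap R S r) = algebraMap R' S' (f r))
    (b : Module.Basis I R S) (b' : Module.Basis I R' S') (hb : ∀ i, b' i = g (b i)) (w : S) (i : I) :
    b'.repr (g w) i = f (b.repr w i) := by
  have hw : g w = ∑ j, f (b.repr w j) • b' j := by
    conv_lhs => rw [← b.sum_repr w]
    rw [map_sum]
    refine Finset.sum_congr rfl fun j _ => ?_
    rw [Algebra.smul_def, map_mul, hcomm, hb, Algebra.smul_def]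
  rw [hw]
  exact congrFun (b'.repr_sum_self _) i

theorem myTrace_comm {I : Type*} [Fintype I] [DecidableEq I]
    (f : R →+* R') (g : S →+* S')
    (hcomm : ∀ r, g (algebraMap R S r) = algebraMap R' S' (f r))
    (b : Module.Basis I R S) (b' : Module.Basis I R' S') (hb : ∀ i, b' i = g (b i)) (y : S) :
    Algebra.trace R' S' (g y) = f (Algebra.trace R S y) := by
  rw [Algebra.trace_eq_matrix_trace b y, Algebra.trace_eq_matrix_trace b' (g y),
    Matrix.trace, Matrix.trace, map_sum]
  refine Finset.sum_congr rfl fun i _ => ?_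
  rw [Matrix.diag_apply, Matrix.diag_apply, Algebra.leftMulMatrix_eq_repr_mul,
    Algebra.leftMulMatrix_eq_repr_mul, hb, ← map_mul g]
  exact myRepr_comm f g hcomm b b' hb (y * b i) i

end TraceComm

section Helpers

variable (p : ℕ) [Fact p.Prime] (M : Type) [Field M]
  [Algebra ℚ_[p] M] [FiniteDimensional ℚ_[p] M]
  [Algebra ℤ_[p] M] [IsScalarTower ℤ_[p] ℚ_[p] M]

theorem myIntClosure_finite : Module.Finite ℤ_[p] (integralClosure ℤ_[p] M) := by
  haveI : Algebra.IsAlgebraic ℚ_[p] M := Algebra.IsAlgebraic.of_finite _ _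
  haveI := IsIntegralClosure.isNoetherian ℤ_[p] ℚ_[p] M (integralClosure ℤ_[p] M)
  exact Module.finite_def.mpr (IsNoetherian.noetherian ⊤)

set_option linter.unusedSectionVars false in
theorem myP_nonunit : ¬ IsUnit (p : integralClosure ℤ_[p] M) := by
  intro h
  obtain ⟨v, hv⟩ := h.exists_right_inv
  have hp0 : (p : ℚ_[p]) ≠ 0 := Nat.cast_ne_zero.mpr (Fact.out : p.Prime).ne_zero
  have hpM : (p : M) = algebraMap ℚ_[p] M (p : ℚ_[p]) := by rw [map_natCast]
  have hM : (p : M) * (v : M) = 1 := by exact_mod_cast congrArg Subtype.val hv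
  have hvM : (v : M) = algebraMap ℚ_[p] M ((p : ℚ_[p])⁻¹) := by
    rw [map_inv₀, ← hpM]
    exact (inv_eq_of_mul_eq_one_right hM).symm
  have hvint : IsIntegral ℤ_[p] ((v : M)) := v.2
  rw [hvM] at hvint
  have hint : IsIntegral ℤ_[p] ((p : ℚ_[p])⁻¹) :=
    (isIntegral_algebraMap_iff ((algebraMap ℚ_[p] M).injective)).mp hvint
  obtain ⟨y, hy⟩ := IsIntegrallyClosed.isIntegral_iff.mp hint
  have hyu : IsUnit (p : ℤ_[p]) := by
    refine IsUnit.of_mul_eq_one y ?_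
    apply IsFractionRing.injective ℤ_[p] ℚ_[p]
    rw [map_mul, hy, map_one, map_natCast, mul_inv_cancel₀ hp0]
  exact mem_nonunits_iff.mp PadicInt.p_nonunit hyu

theorem myP_mem_max [IsLocalRing (integralClosure ℤ_[p] M)] :
    (p : integralClosure ℤ_[p] M) ∈ IsLocalRing.maximalIdeal (integralClosure ℤ_[p] M) :=
  (IsLocalRing.mem_maximalIdeal _).mpr (myP_nonunit p M)

theorem myResidue_finite [IsLocalRing (integralClosure ℤ_[p] M)] :
    Finite (IsLocalRing.ResidueField (integralClosure ℤ_[p] M)) := by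
  classical
  haveI := myIntClosure_finite p M
  obtain ⟨n, s, hs⟩ := Module.Finite.exists_fin (R := ℤ_[p])
    (M := ↥(integralClosure ℤ_[p] M))
  refine Finite.of_surjective
    (fun a : Fin n → ZMod p => ∑ j, (a j).val • IsLocalRing.residue _ (s j)) ?_
  intro x
  obtain ⟨y, rfl⟩ := IsLocalRing.residue_surjective x
  have hy : y ∈ Submodule.span ℤ_[p] (Set.range s) := hs ▸ Submodule.mem_top
  rw [Submodule.mem_span_range_iff_exists_fun] at hy
  obtain ⟨cf, hcf⟩ := hy
  refine ⟨fun j => PadicInt.toZMod (cf j), ?_⟩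
  haveI : NeZero p := ⟨(Fact.out : p.Prime).ne_zero⟩
  have hkey : ∀ (a : ℤ_[p]) (u : ↥(integralClosure ℤ_[p] M)),
      IsLocalRing.residue _ (a • u) = (PadicInt.toZMod a).val • IsLocalRing.residue _ u := by
    intro a u
    have h2 : a - ((PadicInt.toZMod a).val : ℤ_[p]) ∈ RingHom.ker (PadicInt.toZMod (p := p)) := by
      rw [RingHom.mem_ker, map_sub, map_natCast, ZMod.natCast_rightInverse _, sub_self]
    rw [PadicInt.ker_toZMod, PadicInt.maximalIdeal_eq_span_p, Ideal.mem_span_singleton] at h2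
    obtain ⟨d, hd⟩ := h2
    have h1 : a • u - ((PadicInt.toZMod a).val : ℤ_[p]) • u
        ∈ IsLocalRing.maximalIdeal (integralClosure ℤ_[p] M) := by
      rw [← sub_smul, hd, mul_smul]
      have h3 : ((p : ℤ_[p]) • (d • u)) = ((p : integralClosure ℤ_[p] M)) * (d • u) := by
        rw [Algebra.smul_def, map_natCast]
      rw [h3]
      exact Ideal.mul_mem_right _ _ (myP_mem_max p M)
    have h4 : IsLocalRing.residue _ (a • u)
        = IsLocalRing.residue _ (((PadicInt.toZMod a).val : ℤ_[p]) • u) := by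
      rw [← sub_eq_zero, ← map_sub]
      exact (IsLocalRing.residue_eq_zero_iff _).mpr h1
    rw [h4, show (((PadicInt.toZMod a).val : ℤ_[p]) • u) = ((PadicInt.toZMod a).val • u) from
      Nat.cast_smul_eq_nsmul _ _ _, map_nsmul]
  rw [← hcf, map_sum]
  exact Finset.sum_congr rfl fun j _ => (hkey (cf j) (s j)).symm

end Helpers

set_option maxHeartbeats 4000000 in
set_option synthInstance.maxHeartbeats 400000 in
theorem exists_dual_system
    (p : ℕ) [Fact p.Prime]
    (K L : Type) [Field K] [Field L]
    [Algebra ℚ_[p] K] [FiniteDimensional ℚ_[p] K]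
    [Algebra ℚ_[p] L] [FiniteDimensional ℚ_[p] L]
    [Algebra ℤ_[p] K] [IsScalarTower ℤ_[p] ℚ_[p] K]
    [Algebra ℤ_[p] L] [IsScalarTower ℤ_[p] ℚ_[p] L]
    [Algebra K L] [IsScalarTower ℚ_[p] K L] [IsScalarTower ℤ_[p] K L]
    [FiniteDimensional K L] [IsGalois K L]
    [IsLocalRing (integralClosure ℤ_[p] K)] [IsLocalRing (integralClosure ℤ_[p] L)]
    (hur : IsUnramifiedExt p K L) :
    ∃ (I : Type) (_ : Fintype I) (X Xs : I → L),
      (∀ i, X i ∈ (integralClosure ℤ_[p] L : Set L)) ∧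
      (∀ i, Xs i ∈ (integralClosure ℤ_[p] L : Set L)) ∧
      (∀ w : L, ∑ i, (Algebra.trace K L (Xs i * w)) • X i = w) := by
  classical
  replace hur : Ideal.map (algebraMap (integralClosure ℤ_[p] K) (integralClosure ℤ_[p] L))
      (IsLocalRing.maximalIdeal (integralClosure ℤ_[p] K)) =
      IsLocalRing.maximalIdeal (integralClosure ℤ_[p] L) := hur
  haveI : Algebra.IsAlgebraic ℚ_[p] K := Algebra.IsAlgebraic.of_finite _ _
  haveI : Algebra.IsAlgebraic ℚ_[p] L := Algebra.IsAlgebraic.of_finite _ _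
  haveI : Module.Finite ℤ_[p] (integralClosure ℤ_[p] L) := myIntClosure_finite p L
  haveI : IsScalarTower ℤ_[p] (integralClosure ℤ_[p] K) (integralClosure ℤ_[p] L) :=
    IsScalarTower.of_algebraMap_eq fun x => ((OKtoOL p K L).commutes x).symm
  haveI : Module.Finite (integralClosure ℤ_[p] K) (integralClosure ℤ_[p] L) :=
    Module.Finite.of_restrictScalars_finite ℤ_[p] _ _
  haveI : IsDedekindDomain (integralClosure ℤ_[p] K) :=
    integralClosure.isDedekindDomain ℤ_[p] ℚ_[p] K
  haveI : IsPrincipalIdealRing (integralClosure ℤ_[p] K) := by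
    refine IsPrincipalIdealRing.of_finite_primes ?_
    apply Set.Finite.subset
      ((Set.finite_singleton (IsLocalRing.maximalIdeal (integralClosure ℤ_[p] K))).insert ⊥)
    intro I hI
    by_cases hbot : I = ⊥
    · exact Set.mem_insert_iff.mpr (Or.inl hbot)
    · exact Set.mem_insert_iff.mpr (Or.inr
        (IsLocalRing.eq_maximalIdeal (Ideal.IsPrime.isMaximal hI hbot)))
  have hcoe : ∀ x : (integralClosure ℤ_[p] K),
      ((algebraMap (integralClosure ℤ_[p] K) (integralClosure ℤ_[p] L) x : _) : L)
        = algebraMap K L (x : K) := fun x => rfl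
  have hinj : Function.Injective
      (algebraMap (integralClosure ℤ_[p] K) (integralClosure ℤ_[p] L)) := by
    intro a b h
    have : algebraMap K L (a : K) = algebraMap K L (b : K) := by rw [← hcoe, ← hcoe, h]
    exact Subtype.ext ((algebraMap K L).injective this)
  haveI : FaithfulSMul (integralClosure ℤ_[p] K) (integralClosure ℤ_[p] L) :=
    (faithfulSMul_iff_algebraMap_injective _ _).mpr hinj
  haveI : Module.Free (integralClosure ℤ_[p] K) (integralClosure ℤ_[p] L) :=
    Module.free_of_finite_type_torsion_free'
  set b := Module.Free.chooseBasis (integralClosure ℤ_[p] K) (integralClosure ℤ_[p] L) with hbdef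
  set I := Module.Free.ChooseBasisIndex (integralClosure ℤ_[p] K) (integralClosure ℤ_[p] L)
  -- residue fields
  haveI : IsLocalHom (algebraMap (integralClosure ℤ_[p] K) (integralClosure ℤ_[p] L)) := by
    constructor
    intro a ha
    by_contra h
    have h1 : a ∈ IsLocalRing.maximalIdeal (integralClosure ℤ_[p] K) :=
      (IsLocalRing.mem_maximalIdeal _).mpr h
    have h2 : algebraMap (integralClosure ℤ_[p] K) (integralClosure ℤ_[p] L) a
        ∈ IsLocalRing.maximalIdeal (integralClosure ℤ_[p] L) := by
      rw [← hur]; exact Ideal.mem_map_of_mem _ h1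
    exact (IsLocalRing.mem_maximalIdeal _).mp h2 ha
  have hrescomm : ∀ r : (integralClosure ℤ_[p] K),
      IsLocalRing.residue (integralClosure ℤ_[p] L)
          (algebraMap (integralClosure ℤ_[p] K) (integralClosure ℤ_[p] L) r)
        = algebraMap (IsLocalRing.ResidueField (integralClosure ℤ_[p] K))
            (IsLocalRing.ResidueField (integralClosure ℤ_[p] L))
            (IsLocalRing.residue _ r) :=
    fun r => (IsLocalRing.ResidueField.map_residue _ r).symm
  have hsm : ∀ (a : (integralClosure ℤ_[p] K)) (y : (integralClosure ℤ_[p] L)),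
      IsLocalRing.residue (integralClosure ℤ_[p] L) (a • y)
        = IsLocalRing.residue (integralClosure ℤ_[p] K) a • IsLocalRing.residue _ y := by
    intro a y
    rw [Algebra.smul_def, map_mul, hrescomm, Algebra.smul_def]
  -- the reduced basis
  have hli : LinearIndependent (IsLocalRing.ResidueField (integralClosure ℤ_[p] K))
      (fun i : I => IsLocalRing.residue (integralClosure ℤ_[p] L) (b i)) := by
    rw [Fintype.linearIndependent_iff]
    intro d hd i
    choose cf hcf using fun j => IsLocalRing.residue_surjective
      (R := (integralClosure ℤ_[p] K)) (d j)
    have h0 : IsLocalRing.residue (integralClosure ℤ_[p] L) (∑ j, cf j • b j) = 0 := by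
      rw [map_sum]
      simp_rw [hsm, hcf]
      exact hd
    rw [IsLocalRing.residue_eq_zero_iff] at h0
    have h1 : (∑ j, cf j • b j) ∈ (IsLocalRing.maximalIdeal (integralClosure ℤ_[p] K)) •
        (⊤ : Submodule (integralClosure ℤ_[p] K) (integralClosure ℤ_[p] L)) := by
      rw [Ideal.smul_top_eq_map, Submodule.restrictScalars_mem, hur]
      exact h0
    have h2 : b.coord i (∑ j, cf j • b j)
        ∈ IsLocalRing.maximalIdeal (integralClosure ℤ_[p] K) := by
      refine Submodule.smul_induction_on h1 ?_ ?_
      · intro r hr n _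
        rw [map_smul, smul_eq_mul]
        exact Ideal.mul_mem_right _ _ hr
      · intro x y hx hy
        rw [map_add]; exact add_mem hx hy
    have h3 : b.coord i (∑ j, cf j • b j) = cf i := by
      rw [Module.Basis.coord_apply]
      exact congrFun (b.repr_sum_self cf) i
    rw [← hcf i]
    rw [h3] at h2
    exact (IsLocalRing.residue_eq_zero_iff _).mpr h2
  have hsp : ⊤ ≤ Submodule.span (IsLocalRing.ResidueField (integralClosure ℤ_[p] K))
      (Set.range (fun i : I => IsLocalRing.residue (integralClosure ℤ_[p] L) (b i))) := by
    intro x _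
    obtain ⟨y, rfl⟩ := IsLocalRing.residue_surjective x
    have hrep : IsLocalRing.residue (integralClosure ℤ_[p] L) y
        = ∑ j, (IsLocalRing.residue (integralClosure ℤ_[p] K) (b.repr y j)) •
            IsLocalRing.residue (integralClosure ℤ_[p] L) (b j) := by
      conv_lhs => rw [← b.sum_repr y]
      rw [map_sum]
      exact Finset.sum_congr rfl fun j _ => hsm _ _
    rw [hrep]
    exact Submodule.sum_mem _ fun j _ =>
      Submodule.smul_mem _ _ (Submodule.subset_span ⟨j, rfl⟩)
  set bbar := Module.Basis.mk hli hsp with hbbar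
  -- separability of the residue extension
  haveI : Finite (IsLocalRing.ResidueField (integralClosure ℤ_[p] K)) := myResidue_finite p K
  haveI : Module.Finite (IsLocalRing.ResidueField (integralClosure ℤ_[p] K))
      (IsLocalRing.ResidueField (integralClosure ℤ_[p] L)) := Module.Finite.of_basis bbar
  haveI : Algebra.IsAlgebraic (IsLocalRing.ResidueField (integralClosure ℤ_[p] K))
      (IsLocalRing.ResidueField (integralClosure ℤ_[p] L)) := Algebra.IsAlgebraic.of_finite _ _
  -- the trace matrix is invertible
  have hTdet : IsUnit (Algebra.traceMatrix (integralClosure ℤ_[p] K) ⇑b).det := by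
    by_contra h
    have hm : (Algebra.traceMatrix (integralClosure ℤ_[p] K) ⇑b).det
        ∈ IsLocalRing.maximalIdeal (integralClosure ℤ_[p] K) :=
      (IsLocalRing.mem_maximalIdeal _).mpr h
    have h0 : IsLocalRing.residue (integralClosure ℤ_[p] K)
        ((Algebra.traceMatrix (integralClosure ℤ_[p] K) ⇑b).det) = 0 :=
      (IsLocalRing.residue_eq_zero_iff _).mpr hm
    have hmap : IsLocalRing.residue (integralClosure ℤ_[p] K)
        ((Algebra.traceMatrix (integralClosure ℤ_[p] K) ⇑b).det)
        = (Algebra.traceMatrix (IsLocalRing.ResidueField (integralClosure ℤ_[p] K)) ⇑bbar).det := by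
      rw [RingHom.map_det]
      congr 1
      ext i j
      rw [RingHom.mapMatrix_apply, Matrix.map_apply, Algebra.traceMatrix_apply,
        Algebra.traceMatrix_apply, Algebra.traceForm_apply, Algebra.traceForm_apply]
      have := myTrace_comm (IsLocalRing.residue (integralClosure ℤ_[p] K))
        (IsLocalRing.residue (integralClosure ℤ_[p] L)) hrescomm b bbar
        (fun i => by rw [hbbar, Module.Basis.mk_apply]) (b i * b j)
      rw [← this, map_mul, hbbar, Module.Basis.mk_apply, Module.Basis.mk_apply]
    have hdnz := Algebra.discr_not_zero_of_basis
      (IsLocalRing.ResidueField (integralClosure ℤ_[p] K)) bbar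
    rw [Algebra.discr_def] at hdnz
    rw [hmap] at h0
    exact hdnz h0
  letI := Matrix.invertibleOfIsUnitDet _ hTdet
  set T := Algebra.traceMatrix (integralClosure ℤ_[p] K) ⇑b with hTdef
  set Minv := ⅟T with hMinv
  set xstar : I → (integralClosure ℤ_[p] L) := fun i => ∑ j, Minv i j • b j with hxstar
  have hdualO : ∀ i j, Algebra.trace (integralClosure ℤ_[p] K) (integralClosure ℤ_[p] L)
      (b i * xstar j) = if i = j then 1 else 0 := by
    intro i j
    rw [hxstar]
    simp only [Finset.mul_sum, map_sum]
    have hterm : ∀ k, Algebra.trace (integralClosure ℤ_[p] K) (integralClosure ℤ_[p] L)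
        (b i * Minv j k • b k) = Minv j k * T k i := by
      intro k
      rw [mul_smul_comm, map_smul, smul_eq_mul]
      congr 1
      rw [hTdef, Algebra.traceMatrix_apply, Algebra.traceForm_apply, mul_comm]
    simp_rw [hterm]
    have : ∑ k, Minv j k * T k i = (Minv * T) j i := by rw [Matrix.mul_apply]
    rw [this, invOf_mul_self, Matrix.one_apply]
    by_cases hij : i = j <;> simp [hij, eq_comm]
  -- the basis of L over K
  haveI : IsFractionRing (integralClosure ℤ_[p] K) K :=
    integralClosure.isFractionRing_of_finite_extension ℚ_[p] K
  have hcomm2 : ∀ r : (integralClosure ℤ_[p] K),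
      algebraMap (integralClosure ℤ_[p] L) L
          (algebraMap (integralClosure ℤ_[p] K) (integralClosure ℤ_[p] L) r)
        = algebraMap K L (algebraMap (integralClosure ℤ_[p] K) K r) := fun r => hcoe r
  have hXli : LinearIndependent K (fun i : I => ((b i : (integralClosure ℤ_[p] L)) : L)) := by
    rw [Fintype.linearIndependent_iff]
    intro cc hcc
    obtain ⟨dd, hdd⟩ := IsLocalization.exist_integer_multiples
      (nonZeroDivisors (integralClosure ℤ_[p] K)) Finset.univ cc
    choose ee hee using fun i => hdd i (Finset.mem_univ i)
    have hz : ((∑ i, ee i • b i : (integralClosure ℤ_[p] L)) : L) = 0 := by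
      have hterm : ∀ i, ((ee i • b i : (integralClosure ℤ_[p] L)) : L)
          = (algebraMap (integralClosure ℤ_[p] K) K (ee i)) • ((b i : (integralClosure ℤ_[p] L)) : L) := by
        intro i
        rw [Algebra.smul_def, Algebra.smul_def]
        push_cast
        rw [hcoe]
        rfl
      calc (((∑ i, ee i • b i : (integralClosure ℤ_[p] L))) : L)
          = ∑ i, ((ee i • b i : (integralClosure ℤ_[p] L)) : L) := by push_cast; rfl
        _ = ∑ i, ((dd : (integralClosure ℤ_[p] K)) • cc i) • ((b i : (integralClosure ℤ_[p] L)) : L) := by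
            refine Finset.sum_congr rfl fun i _ => ?_
            rw [hterm, hee]
        _ = ((dd : (integralClosure ℤ_[p] K)) : K) • ∑ i, cc i • ((b i : (integralClosure ℤ_[p] L)) : L) := by
            rw [Finset.smul_sum]
            refine Finset.sum_congr rfl fun i _ => ?_
            rw [Algebra.smul_def (dd : (integralClosure ℤ_[p] K)) (cc i), smul_smul]
            rfl
        _ = 0 := by rw [hcc, smul_zero]
    have hz2 : (∑ i, ee i • b i : (integralClosure ℤ_[p] L)) = 0 := by
      exact_mod_cast hz
    have hee0 : ∀ i, ee i = 0 := by
      have := Fintype.linearIndependent_iff.mp b.linearIndependent ee hz2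
      exact this
    intro i
    have h5 : ((dd : (integralClosure ℤ_[p] K)) : K) * cc i = 0 := by
      have := hee i
      rw [hee0 i, map_zero] at this
      rw [Algebra.smul_def] at this
      exact this.symm
    have hddne : ((dd : (integralClosure ℤ_[p] K)) : K) ≠ 0 := by
      have := nonZeroDivisors.coe_ne_zero dd
      intro hzz
      apply this
      exact_mod_cast Subtype.ext hzz
    exact (mul_eq_zero.mp h5).resolve_left hddne
  have hXsp : ⊤ ≤ Submodule.span K
      (Set.range (fun i : I => ((b i : (integralClosure ℤ_[p] L)) : L))) := by
    intro x _
    have halgQ : IsAlgebraic ℚ_[p] x := Algebra.IsAlgebraic.isAlgebraic x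
    have halg : IsAlgebraic ℤ_[p] x := by
      rw [IsFractionRing.isAlgebraic_iff ℤ_[p] ℚ_[p] L]
      exact halgQ
    have hinjL : ∀ t : ℤ_[p], algebraMap ℤ_[p] L t = 0 → t = 0 := by
      intro t ht
      have : algebraMap ℚ_[p] L (algebraMap ℤ_[p] ℚ_[p] t) = 0 := by
        rw [← IsScalarTower.algebraMap_apply]; exact ht
      have h2 : algebraMap ℤ_[p] ℚ_[p] t = 0 := by
        exact (map_eq_zero_iff _ (algebraMap ℚ_[p] L).injective).mp this
      exact (map_eq_zero_iff _ (IsFractionRing.injective ℤ_[p] ℚ_[p])).mp h2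
    obtain ⟨d, hd0, hdint⟩ := halg.exists_integral_multiple
    obtain ⟨y, hyd⟩ : ∃ y : integralClosure ℤ_[p] L, algebraMap ℤ_[p] L d * x = (y : L) :=
      ⟨⟨d • x, hdint⟩, (Algebra.smul_def d x).symm⟩
    have hyspan : (y : L) ∈ Submodule.span K
        (Set.range (fun i : I => ((b i : (integralClosure ℤ_[p] L)) : L))) := by
      have hyrep : (y : L) = ∑ i, (algebraMap (integralClosure ℤ_[p] K) K (b.repr y i)) •
          ((b i : (integralClosure ℤ_[p] L)) : L) := by
        conv_lhs => rw [← b.sum_repr y]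
        push_cast
        refine Finset.sum_congr rfl fun i _ => ?_
        rw [Algebra.smul_def, Algebra.smul_def]
        push_cast
        rw [hcoe]
        rfl
      rw [hyrep]
      exact Submodule.sum_mem _ fun i _ =>
        Submodule.smul_mem _ _ (Submodule.subset_span ⟨i, rfl⟩)
    have hdK : algebraMap ℤ_[p] K d ≠ 0 := by
      intro hzz
      apply hd0
      have : algebraMap ℚ_[p] K (algebraMap ℤ_[p] ℚ_[p] d) = 0 := by
        rw [← IsScalarTower.algebraMap_apply]; exact hzz
      have h2 : algebraMap ℤ_[p] ℚ_[p] d = 0 :=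
        (map_eq_zero_iff _ (algebraMap ℚ_[p] K).injective).mp this
      exact (map_eq_zero_iff _ (IsFractionRing.injective ℤ_[p] ℚ_[p])).mp h2
    have hx : x = (algebraMap ℤ_[p] K d)⁻¹ • (y : L) := by
      have h6 : (y : L) = algebraMap K L (algebraMap ℤ_[p] K d) * x := by
        rw [← hyd]
        congr 1
        rw [← IsScalarTower.algebraMap_apply]
      rw [h6, Algebra.smul_def, ← mul_assoc, ← map_mul, inv_mul_cancel₀ hdK, map_one, one_mul]
    rw [hx]
    exact Submodule.smul_mem _ _ hyspan
  set XB := Module.Basis.mk hXli hXsp with hXB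
  -- the dual pair in L
  have hdualK : ∀ i j, Algebra.trace K L (((b i : (integralClosure ℤ_[p] L)) : L) *
      ((xstar j : (integralClosure ℤ_[p] L)) : L)) = if i = j then 1 else 0 := by
    intro i j
    have hmul : ((b i : (integralClosure ℤ_[p] L)) : L) * ((xstar j : (integralClosure ℤ_[p] L)) : L)
        = algebraMap (integralClosure ℤ_[p] L) L (b i * xstar j) := by push_cast; rfl
    rw [hmul]
    rw [myTrace_comm (algebraMap (integralClosure ℤ_[p] K) K)
      (algebraMap (integralClosure ℤ_[p] L) L) hcomm2 b XB
      (fun i => by rw [hXB, Module.Basis.mk_apply]; rfl) (b i * xstar j)]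
    rw [hdualO i j]
    by_cases hij : i = j <;> simp [hij]
  refine ⟨I, inferInstance, (fun i : I => ((b i : (integralClosure ℤ_[p] L)) : L)),
    (fun i : I => ((xstar i : (integralClosure ℤ_[p] L)) : L)), ?_, ?_, ?_⟩
  · intro i
    exact SetLike.coe_mem _
  · intro i
    exact SetLike.coe_mem _
  · intro w
    conv_rhs => rw [← XB.sum_repr w]
    refine Finset.sum_congr rfl fun i _ => ?_
    rw [hXB, Module.Basis.mk_apply]
    congr 1
    have hw : w = ∑ j, XB.repr w j • ((b j : (integralClosure ℤ_[p] L)) : L) := by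
      conv_lhs => rw [← XB.sum_repr w]
      refine Finset.sum_congr rfl fun j _ => ?_
      rw [hXB, Module.Basis.mk_apply]
    conv_lhs => rw [hw]
    rw [Finset.mul_sum, map_sum]
    have hterm : ∀ j, Algebra.trace K L (((xstar i : (integralClosure ℤ_[p] L)) : L)
        * XB.repr w j • ((b j : (integralClosure ℤ_[p] L)) : L))
        = XB.repr w j * (if j = i then 1 else 0) := by
      intro j
      rw [mul_smul_comm, map_smul, smul_eq_mul]
      congr 1
      rw [mul_comm]
      exact hdualK j i
    simp_rw [hterm]
    rw [Finset.sum_congr rfl (fun j _ => by rw [mul_ite, mul_one, mul_zero])]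
    rw [Finset.sum_ite_eq' Finset.univ i (fun j => XB.repr w j)]
    simp [hXB, Module.Basis.mk_repr]

section KeyDelta

variable (K L : Type*) [Field K] [Field L] [Algebra K L] [FiniteDimensional K L] [IsGalois K L]

theorem myKey_delta [DecidableEq (L ≃ₐ[K] L)] {I : Type*} [Fintype I] (X Xs : I → L)
    (hexp : ∀ w : L, ∑ i, (Algebra.trace K L (Xs i * w)) • X i = w)
    (ρ : L ≃ₐ[K] L) :
    ∑ i, X i * ρ (Xs i) = if ρ = 1 then 1 else 0 := by
  classical
  have hA : ∀ w : L, ∑ σ : L ≃ₐ[K] L, (∑ i, X i * σ (Xs i)) * σ w = w := by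
    intro w
    have h1 : ∀ σ : L ≃ₐ[K] L, (∑ i, X i * σ (Xs i)) * σ w = ∑ i, X i * σ (Xs i * w) := by
      intro σ
      rw [Finset.sum_mul]
      exact Finset.sum_congr rfl fun i _ => by rw [map_mul, mul_assoc]
    simp_rw [h1]
    rw [Finset.sum_comm]
    have h2 : ∀ i, ∑ σ : L ≃ₐ[K] L, X i * σ (Xs i * w) = (Algebra.trace K L (Xs i * w)) • X i := by
      intro i
      rw [← Finset.mul_sum, ← trace_eq_sum_automorphisms, Algebra.smul_def, mul_comm]
    simp_rw [h2]
    exact hexp w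
  -- linear independence of characters
  set F : (L ≃ₐ[K] L) → (L →* L) := fun σ => MonoidHomClass.toMonoidHom σ with hF
  have hinj : Function.Injective F := by
    intro a b h
    ext x
    exact DFunLike.congr_fun h x
  have hli := (linearIndependent_monoidHom L L).comp F hinj
  have h0 : ∑ σ : L ≃ₐ[K] L,
      ((∑ i, X i * σ (Xs i)) - if σ = 1 then 1 else 0) • (⇑(F σ) : L → L) = 0 := by
    funext w
    rw [Finset.sum_apply]
    have : ∀ σ : L ≃ₐ[K] L,
        (((∑ i, X i * σ (Xs i)) - if σ = 1 then 1 else 0) • (⇑(F σ) : L → L)) w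
        = (∑ i, X i * σ (Xs i)) * σ w - (if σ = 1 then 1 else 0) * σ w := by
      intro σ
      simp only [Pi.smul_apply, smul_eq_mul, sub_mul]
      rfl
    simp_rw [this]
    rw [Finset.sum_sub_distrib, hA w]
    have : ∑ σ : L ≃ₐ[K] L, (if σ = 1 then (1:L) else 0) * σ w = w := by
      rw [Finset.sum_congr rfl (fun σ _ => by rw [ite_mul, one_mul, zero_mul])]
      rw [Finset.sum_ite_eq' Finset.univ (1 : L ≃ₐ[K] L) (fun σ => σ w)]
      simp
    rw [this, sub_self]
    rfl
  have := Fintype.linearIndependent_iff.mp hli _ h0 ρ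
  exact sub_eq_zero.mp this

end KeyDelta


/-- for an unramified extension `L/K` of `p`-adic fields,
`A_H = O_L[N]^G`. -/
theorem statement4
    (p : ℕ) [Fact p.Prime]
    (K L : Type) [Field K] [Field L]
    [Algebra ℚ_[p] K] [FiniteDimensional ℚ_[p] K]
    [Algebra ℚ_[p] L] [FiniteDimensional ℚ_[p] L]
    [Algebra ℤ_[p] K] [IsScalarTower ℤ_[p] ℚ_[p] K]
    [Algebra ℤ_[p] L] [IsScalarTower ℤ_[p] ℚ_[p] L]
    [Algebra K L] [IsScalarTower ℚ_[p] K L] [IsScalarTower ℤ_[p] K L]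
    [FiniteDimensional K L] [IsGalois K L]
    [IsLocalRing (integralClosure ℤ_[p] K)] [IsLocalRing (integralClosure ℤ_[p] L)]
    (hur : IsUnramifiedExt p K L)
    (N : Type) [Group N] [Fintype N]
    (ι : N →* Equiv.Perm (L ≃ₐ[K] L))
    (hι : Function.Injective ι)
    (hcard : Nat.card N = Nat.card (L ≃ₐ[K] L))
    (htrans : ∀ x y : L ≃ₐ[K] L, ∃ n : N, ι n x = y)
    (c : (L ≃ₐ[K] L) →* MulAut N)
    (hc : ∀ (g : L ≃ₐ[K] L) (n : N),
      ι (c g n) = lam K L g * ι n * (lam K L g)⁻¹) :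
    AH p K L N ι c = OLN p K L N c := by
  classical
  obtain ⟨I, hFin, X, Xs, hXmem, hXsmem, hexp⟩ := exists_dual_system p K L hur
  letI := hFin
  letI : Fintype (L ≃ₐ[K] L) := AlgEquiv.fintype K L
  have hσinj : Function.Injective (fun n : N => ((ι n)⁻¹ (1 : L ≃ₐ[K] L))) := by
    have hev : ∀ g : L ≃ₐ[K] L, Function.Injective (fun n : N => ι n g) := by
      intro g
      have hsurj : Function.Surjective (fun n : N => ι n g) := fun y => htrans g y
      exact ((Fintype.bijective_iff_surjective_and_card _).mpr
        ⟨hsurj, by rw [← Nat.card_eq_fintype_card, ← Nat.card_eq_fintype_card]; exact hcard⟩).injective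
    intro n m h
    simp only at h
    apply hev ((ι n)⁻¹ (1 : L ≃ₐ[K] L))
    show (ι n) ((ι n)⁻¹ (1 : L ≃ₐ[K] L)) = (ι m) ((ι n)⁻¹ (1 : L ≃ₐ[K] L))
    have hai : ∀ (e : Equiv.Perm (L ≃ₐ[K] L)) x, e (e⁻¹ x) = x := fun e x => e.apply_symm_apply x
    rw [hai, h, hai]
  have hσpres : ∀ (σ : L ≃ₐ[K] L) (x : L), x ∈ (integralClosure ℤ_[p] L : Set L) →
      σ x ∈ (integralClosure ℤ_[p] L : Set L) := by
    intro σ x hx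
    have hx' : IsIntegral ℤ_[p] x := hx
    exact hx'.map (AlgHom.restrictScalars ℤ_[p] (σ : L →ₐ[K] L))
  ext z
  constructor
  · rintro ⟨hH, hint⟩
    refine ⟨hH, fun n₀ => ?_⟩
    have hKD := myKey_delta K L X Xs hexp
    have key : ∀ n : N, (((ι n₀)⁻¹ (1 : L ≃ₐ[K] L)) : L ≃ₐ[K] L)
        (∑ i, X i * ((((ι n₀)⁻¹ (1 : L ≃ₐ[K] L))⁻¹ * ((ι n)⁻¹ (1 : L ≃ₐ[K] L))) (Xs i)))
        = if n = n₀ then 1 else 0 := by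
      intro n
      rw [hKD]
      by_cases h : n = n₀
      · subst h
        simp
      · have hρ : ¬(((ι n₀)⁻¹ (1 : L ≃ₐ[K] L))⁻¹ * ((ι n)⁻¹ (1 : L ≃ₐ[K] L)) = 1) := by
          intro hcontra
          exact h (hσinj (inv_mul_eq_one.mp hcontra).symm)
        rw [if_neg hρ, map_zero, if_neg h]
    have hS : z.coeff n₀ = ∑ i, (hopfAct K L N ι z (Xs i)) * (((ι n₀)⁻¹ (1 : L ≃ₐ[K] L)) (X i)) := by
      have hact : ∀ x : L, hopfAct K L N ι z x
          = ∑ n : N, z.coeff n * ((ι n)⁻¹ (1 : L ≃ₐ[K] L)) x := by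
        intro x
        rw [hopfAct, Finsupp.sum_fintype]
        intro n; rw [zero_mul]
      calc z.coeff n₀ = ∑ n : N, z.coeff n * (if n = n₀ then 1 else 0) := by
            rw [Finset.sum_congr rfl (fun n _ => by rw [mul_ite, mul_one, mul_zero])]
            rw [Finset.sum_ite_eq' Finset.univ n₀ (fun n => z.coeff n)]
            simp
        _ = ∑ n : N, z.coeff n * ((((ι n₀)⁻¹ (1 : L ≃ₐ[K] L)) : L ≃ₐ[K] L)
              (∑ i, X i * ((((ι n₀)⁻¹ (1 : L ≃ₐ[K] L))⁻¹ * ((ι n)⁻¹ (1 : L ≃ₐ[K] L))) (Xs i)))) := by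
            refine Finset.sum_congr rfl fun n _ => ?_
            rw [key n]
        _ = ∑ n : N, ∑ i, z.coeff n * ((ι n)⁻¹ (1 : L ≃ₐ[K] L)) (Xs i)
              * ((ι n₀)⁻¹ (1 : L ≃ₐ[K] L)) (X i) := by
            refine Finset.sum_congr rfl fun n _ => ?_
            rw [map_sum, Finset.mul_sum]
            refine Finset.sum_congr rfl fun i _ => ?_
            rw [map_mul]
            have hσσ : (((ι n₀)⁻¹ (1 : L ≃ₐ[K] L)) : L ≃ₐ[K] L)
                (((((ι n₀)⁻¹ (1 : L ≃ₐ[K] L))⁻¹ * ((ι n)⁻¹ (1 : L ≃ₐ[K] L)))) (Xs i))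
                = ((ι n)⁻¹ (1 : L ≃ₐ[K] L)) (Xs i) := by
              rw [AlgEquiv.mul_apply, ← AlgEquiv.mul_apply ((ι n₀)⁻¹ (1 : L ≃ₐ[K] L))
                (((ι n₀)⁻¹ (1 : L ≃ₐ[K] L))⁻¹), mul_inv_cancel, AlgEquiv.one_apply]
            rw [hσσ]
            ring
        _ = ∑ i, (∑ n : N, z.coeff n * ((ι n)⁻¹ (1 : L ≃ₐ[K] L)) (Xs i))
              * ((ι n₀)⁻¹ (1 : L ≃ₐ[K] L)) (X i) := by
            rw [Finset.sum_comm]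
            refine Finset.sum_congr rfl fun i _ => ?_
            rw [Finset.sum_mul]
        _ = ∑ i, (hopfAct K L N ι z (Xs i)) * ((ι n₀)⁻¹ (1 : L ≃ₐ[K] L)) (X i) := by
            refine Finset.sum_congr rfl fun i _ => ?_
            rw [hact]
    rw [hS]
    refine Subalgebra.sum_mem _ fun i _ => Subalgebra.mul_mem _ ?_ ?_
    · exact hint (Xs i) (hXsmem i)
    · exact hσpres _ (X i) (hXmem i)
  · rintro ⟨hH, hint⟩
    refine ⟨hH, fun x hx => ?_⟩
    have hrepr : hopfAct K L N ι z x
        = ∑ n ∈ z.coeff.support, z.coeff n * ((ι n)⁻¹ (1 : L ≃ₐ[K] L)) x := rfl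
    show hopfAct K L N ι z x ∈ integralClosure ℤ_[p] L
    rw [hrepr]
    exact Subalgebra.sum_mem _ fun n _ => Subalgebra.mul_mem _ (hint n) (hσpres _ x hx)
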